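/- There exist $T>0$, a set $U\subseteq[0,T]$ containing $0$ that is non-measurable and contains no measurable subset of positive measure, and smooth functions $H(t,u)=-u^2(t-u)^2$, $g(t,u)=u^2$ on $[0,T]\times U$, such that: (a) the argmax set $\bar U(t)=\{u\in U: H(t,u)=\max_{v\in U}H(t,v)\}$ equals $\{0\}$ for $t\notin U$ and $\{0,t\}$ for $t\in U$; (b) every measurable function $u:[0,T]\to U$ with $u(t)\in\bar U(t)$ a.e. satisfies $u(t)=0$ a.e., hence $g(t,u(t))\le0$ a.e.; but (c) the set $\{t\in[0,T]:\exists v\in\bar U(t),\,g(t,v)>0\}=U\setminus\{0\}$ is not of measure zero. -/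

import Mathlib

open MeasureTheory Set

namespace Stmt14Aux

/-- Equivalence: differ by a rational. -/
def vSetoid : Setoid ℝ where
  r x y := ∃ q : ℚ, x - y = (q : ℝ)
  iseqv := by
    refine ⟨fun x => ⟨0, by simp⟩, ?_, ?_⟩
    · rintro x y ⟨q, hq⟩; exact ⟨-q, by push_cast; linarith⟩
    · rintro x y z ⟨q, hq⟩ ⟨r, hr⟩; exact ⟨q + r, by push_cast; linarith⟩

noncomputable def rep (c : Quotient vSetoid) : ℝ := Int.fract c.out

lemma rep_rel (c : Quotient vSetoid) : vSetoid.r (rep c) c.out := by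
  refine ⟨-⌊c.out⌋, ?_⟩
  rw [rep, Int.fract]
  push_cast
  ring

noncomputable def V : Set ℝ := Set.range rep

lemma V_subset : V ⊆ Ico (0:ℝ) 1 := by
  rintro _ ⟨c, rfl⟩
  exact ⟨Int.fract_nonneg _, Int.fract_lt_one _⟩

lemma V_unique {x y : ℝ} (hx : x ∈ V) (hy : y ∈ V) (q : ℚ) (h : x - y = (q:ℝ)) :
    x = y := by
  obtain ⟨c, rfl⟩ := hx
  obtain ⟨d, rfl⟩ := hy
  have hc := rep_rel c
  have hd := rep_rel d
  have : c = d := by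
    rw [← Quotient.out_equiv_out]
    obtain ⟨a, ha⟩ := hc
    obtain ⟨b, hb⟩ := hd
    exact ⟨-a + q + b, by push_cast; linarith⟩
  rw [this]

lemma V_exists (x : ℝ) : ∃ v ∈ V, ∃ q : ℚ, x - v = (q : ℝ) := by
  refine ⟨rep ⟦x⟧, ⟨_, rfl⟩, ?_⟩
  obtain ⟨a, ha⟩ := rep_rel (⟦x⟧ : Quotient vSetoid)
  have hx : vSetoid.r (Quotient.out (⟦x⟧ : Quotient vSetoid)) x :=
    Quotient.exact (Quotient.out_eq _)
  obtain ⟨b, hb⟩ := hx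
  exact ⟨-(a + b), by push_cast; linarith⟩

/-- translate of a set by a rational -/
def A (s : Set ℝ) (q : ℚ) : Set ℝ := (fun x => -(q:ℝ) + x) ⁻¹' s

lemma volume_A (s : Set ℝ) (q : ℚ) : volume (A s q) = volume s :=
  measure_preimage_add volume _ s

lemma mem_A {s : Set ℝ} {q : ℚ} {x : ℝ} : x ∈ A s q ↔ x - q ∈ s := by
  simp [A, neg_add_eq_sub]

/-- any measurable subset of V is null -/
lemma null_of_subset_V (s : Set ℝ) (hs : s ⊆ V) (hm : MeasurableSet s) :
    volume s = 0 := by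
  by_contra h0
  set ι := {q : ℚ // q ∈ Icc (0:ℚ) 1} with hι
  have hinf : Infinite ι := Set.Icc.infinite (by norm_num)
  have hdisj : Pairwise (Function.onFun Disjoint (fun q : ι => A s q)) := by
    rintro ⟨q, hq⟩ ⟨r, hr⟩ hne
    simp only [Function.onFun, Set.disjoint_left]
    intro x hxq hxr
    rw [mem_A] at hxq hxr
    have h1 : x - (q:ℝ) = x - (r:ℝ) :=
      V_unique (hs hxq) (hs hxr) (r - q) (by push_cast; ring)
    have h2 : (q:ℝ) = (r:ℝ) := by linarith
    exact hne (Subtype.ext (by exact_mod_cast h2))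
  have hmeas : ∀ q : ι, MeasurableSet (A s (q : ℚ)) :=
    fun q => hm.preimage (measurable_const_add _)
  have hU : volume (⋃ q : ι, A s (q : ℚ)) = ∑' q : ι, volume (A s (q:ℚ)) :=
    measure_iUnion hdisj hmeas
  have htop : volume (⋃ q : ι, A s (q : ℚ)) = ⊤ := by
    rw [hU]
    simp only [volume_A]
    exact ENNReal.tsum_const_eq_top_of_ne_zero h0
  have hsub : (⋃ q : ι, A s (q : ℚ)) ⊆ Icc (0:ℝ) 2 := by
    rintro x hx
    simp only [Set.mem_iUnion] at hx
    obtain ⟨⟨q, hq⟩, hxq⟩ := hx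
    rw [mem_A] at hxq
    have h1 := (V_subset (hs hxq)).1
    have h2 := (V_subset (hs hxq)).2
    have hq0 : (0:ℝ) ≤ q := by exact_mod_cast hq.1
    have hq1 : (q:ℝ) ≤ 1 := by exact_mod_cast hq.2
    simp only [Set.mem_Ico] at h1 h2
    exact ⟨by linarith, by linarith⟩
  have hle := (measure_mono hsub).trans_eq Real.volume_Icc
  rw [htop] at hle
  simp at hle

lemma V_not_null : volume V ≠ 0 := by
  intro h0
  have hcover : (Set.univ : Set ℝ) ⊆ ⋃ q : ℚ, A V q := by
    intro x _
    obtain ⟨v, hv, q, hq⟩ := V_exists x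
    refine Set.mem_iUnion.2 ⟨q, mem_A.2 ?_⟩
    have : x - (q:ℝ) = v := by linarith
    rwa [this]
  have hle : volume (Set.univ : Set ℝ) ≤ ∑' q : ℚ, volume (A V q) :=
    (measure_mono hcover).trans (measure_iUnion_le _)
  simp only [volume_A, h0, tsum_zero] at hle
  rw [Real.volume_univ] at hle
  simp at hle

lemma V_not_measurable : ¬ MeasurableSet V :=
  fun h => V_not_null (null_of_subset_V V (subset_refl _) h)

/-- any measurable subset of `insert 0 V` is null -/
lemma null_of_subset_U (s : Set ℝ) (hsU : s ⊆ insert 0 V) (hsm : MeasurableSet s) :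
    volume s = 0 := by
  have hsub : s \ {0} ⊆ V := by
    intro x hx
    rcases hsU hx.1 with rfl | h
    · exact absurd rfl hx.2
    · exact h
  have h0 : volume (s \ {0}) = 0 :=
    null_of_subset_V _ hsub (hsm.diff (measurableSet_singleton 0))
  have hle : volume s ≤ volume (s \ {0}) + volume ({0} : Set ℝ) := by
    refine (measure_mono ?_).trans (measure_union_le _ _)
    intro x hx; by_cases h : x = 0 <;> simp [h, hx]
  simpa [h0, Real.volume_singleton] using hle

/-- any subset of `insert 0 V` whose complement-in-V part is "almost everything" fails:
    `insert 0 V \ {0}` is not null -/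
lemma U_diff_not_null : volume (insert (0:ℝ) V \ {0}) ≠ 0 := by
  intro h0
  apply V_not_null
  have hVsub : V ⊆ (insert (0:ℝ) V \ {0}) ∪ {0} := by
    intro x hx
    by_cases h : x = 0
    · exact Or.inr (by simp [h])
    · exact Or.inl ⟨Set.mem_insert_of_mem _ hx, h⟩
  refine le_antisymm ?_ zero_le
  calc volume V ≤ volume ((insert (0:ℝ) V \ {0}) ∪ {0}) := measure_mono hVsub
    _ ≤ volume (insert (0:ℝ) V \ {0}) + volume ({0} : Set ℝ) := measure_union_le _ _
    _ = 0 := by rw [h0, Real.volume_singleton, add_zero]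

lemma U_not_measurable : ¬ MeasurableSet (insert (0:ℝ) V) := by
  intro hU
  apply V_not_measurable
  have h1 : MeasurableSet (insert (0:ℝ) V \ {0}) := hU.diff (measurableSet_singleton 0)
  have h2 : V = (insert (0:ℝ) V \ {0}) ∪ (V ∩ {0}) := by
    ext x; by_cases hx0 : x = 0 <;> simp [hx0]
  rw [h2]
  exact h1.union ((Set.subsingleton_singleton.anti Set.inter_subset_right).measurableSet)

end Stmt14Aux

open Stmt14Aux

theorem stmt_14 :
    ∃ T : ℝ, 0 < T ∧ ∃ U : Set ℝ, 0 ∈ U ∧ U ⊆ Icc 0 T ∧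
      ¬ MeasurableSet U ∧
      (∀ s ⊆ U, MeasurableSet s → volume s = 0) ∧
      (let H : ℝ → ℝ → ℝ := fun t u => -(u ^ 2 * (t - u) ^ 2)
       let g : ℝ → ℝ → ℝ := fun _ u => u ^ 2
       let Ubar : ℝ → Set ℝ := fun t => {u ∈ U | ∀ v ∈ U, H t v ≤ H t u}
       -- (a) description of the argmax sets
       (∀ t ∈ Icc 0 T, (t ∈ U → Ubar t = {0, t}) ∧ (t ∉ U → Ubar t = {0})) ∧
       -- (b) every measurable selection of the argmax sets vanishes a.e.
       (∀ u : ℝ → ℝ, Measurable u →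
          (∀ᵐ t ∂(volume : Measure ℝ), t ∈ Icc 0 T → u t ∈ Ubar t) →
          (∀ᵐ t ∂(volume : Measure ℝ), t ∈ Icc 0 T → u t = 0) ∧
          (∀ᵐ t ∂(volume : Measure ℝ), t ∈ Icc 0 T → g t (u t) ≤ 0)) ∧
       -- (c) yet the pointwise bad set is not null
       ({t ∈ Icc 0 T | ∃ v ∈ Ubar t, 0 < g t v} = U \ {0} ∧
        volume (U \ {0}) ≠ 0)) := by
  classical
  refine ⟨1, one_pos, insert 0 V, Set.mem_insert _ _, ?_, U_not_measurable,
    null_of_subset_U, ?_⟩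
  · rintro x (rfl | hx)
    · exact ⟨le_refl 0, zero_le_one⟩
    · exact ⟨(V_subset hx).1, le_of_lt (V_subset hx).2⟩
  · intro H g Ubar
    set U : Set ℝ := insert 0 V with hUdef
    have hUsub : U ⊆ Icc (0:ℝ) 1 := by
      rintro x (rfl | hx)
      · exact ⟨le_refl 0, zero_le_one⟩
      · exact ⟨(V_subset hx).1, le_of_lt (V_subset hx).2⟩
    have hH_nonpos : ∀ t v : ℝ, H t v ≤ 0 := fun t v => by
      simp only [H, neg_nonpos]; positivity
    have hH0 : ∀ t : ℝ, H t 0 = 0 := fun t => by simp [H]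
    have hHt : ∀ t : ℝ, H t t = 0 := fun t => by simp [H]
    have h0U : (0:ℝ) ∈ U := Set.mem_insert _ _
    have hUbar_sub : ∀ t u : ℝ, u ∈ Ubar t → u = 0 ∨ u = t := by
      intro t u hu
      have h1 : H t 0 ≤ H t u := hu.2 0 h0U
      rw [hH0] at h1
      have h2 : H t u ≤ 0 := hH_nonpos t u
      have h3 : u ^ 2 * (t - u) ^ 2 = 0 := by
        simp only [H] at h1 h2; linarith
      rcases mul_eq_zero.1 h3 with h | h
      · left; exact pow_eq_zero_iff (by norm_num) |>.1 h
      · right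
        have h4 : t - u = 0 := pow_eq_zero_iff (n := 2) (by norm_num) |>.1 h
        linarith
    have hUbar_memU : ∀ t u : ℝ, u ∈ Ubar t → u ∈ U := fun t u hu => hu.1
    have hzero_mem : ∀ t : ℝ, (0:ℝ) ∈ Ubar t := by
      intro t
      refine ⟨h0U, fun v _ => ?_⟩
      rw [hH0]; exact hH_nonpos t v
    have hmem_self : ∀ t : ℝ, t ∈ U → t ∈ Ubar t := by
      intro t ht
      refine ⟨ht, fun v _ => ?_⟩
      rw [hHt]; exact hH_nonpos t v
    have ha : ∀ t ∈ Icc (0:ℝ) 1, (t ∈ U → Ubar t = {0, t}) ∧ (t ∉ U → Ubar t = {0}) := by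
      intro t _
      constructor
      · intro htU
        apply Set.Subset.antisymm
        · intro u hu
          rcases hUbar_sub t u hu with rfl | rfl
          · exact Or.inl rfl
          · exact Or.inr rfl
        · rintro u (rfl | rfl)
          · exact hzero_mem _
          · exact hmem_self _ htU
      · intro htU
        apply Set.Subset.antisymm
        · intro u hu
          rcases hUbar_sub t u hu with rfl | rfl
          · rfl
          · exact absurd (hUbar_memU _ _ hu) htU
        · rintro u rfl; exact hzero_mem _
    refine ⟨ha, ?_, ?_, U_diff_not_null⟩
    · -- (b)
      intro u hu hae
      have key : ∀ᵐ t ∂(volume : Measure ℝ), t ∈ Icc (0:ℝ) 1 → u t = 0 := by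
        obtain ⟨N, hsubN, hNmeas, hNvol⟩ :=
          exists_measurable_superset_of_null (ae_iff.1 hae)
        set B := (Icc (0:ℝ) 1 ∩ u ⁻¹' ({0}ᶜ)) \ N with hB
        have hBm : MeasurableSet B :=
          ((measurableSet_Icc.inter (hu (measurableSet_singleton 0).compl)).diff hNmeas)
        have hBU : B ⊆ U := by
          rintro t ⟨⟨ht1, ht2⟩, htN⟩
          have hgood : t ∈ Icc (0:ℝ) 1 → u t ∈ Ubar t := by
            by_contra hcon
            exact htN (hsubN hcon)
          have hmem := hgood ht1
          rcases hUbar_sub t (u t) hmem with h | h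
          · exact absurd h ht2
          · rw [← h]; exact hUbar_memU _ _ hmem
        have hBnull : volume B = 0 := null_of_subset_U B hBU hBm
        rw [ae_iff]
        have hsub2 : {a : ℝ | ¬(a ∈ Icc (0:ℝ) 1 → u a = 0)} ⊆ B ∪ N := by
          intro t ht
          simp only [Set.mem_setOf_eq, Classical.not_imp] at ht
          by_cases htN : t ∈ N
          · exact Or.inr htN
          · exact Or.inl ⟨⟨ht.1, ht.2⟩, htN⟩
        refine le_antisymm ?_ zero_le
        calc volume {a : ℝ | ¬(a ∈ Icc (0:ℝ) 1 → u a = 0)}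
            ≤ volume (B ∪ N) := measure_mono hsub2
          _ ≤ volume B + volume N := measure_union_le _ _
          _ = 0 := by simp [hBnull, hNvol]
      refine ⟨key, ?_⟩
      filter_upwards [key] with t ht htI
      rw [ht htI]
      simp [g]
    · -- (c) set equality
      ext t
      simp only [Set.mem_setOf_eq, Set.mem_diff, Set.mem_singleton_iff]
      constructor
      · rintro ⟨htI, v, hv, hgv⟩
        have hvne : v ≠ 0 := by
          intro h
          rw [h] at hgv
          simp [g] at hgv
        rcases hUbar_sub t v hv with h | h
        · exact absurd h hvne
        · subst h
          exact ⟨hUbar_memU _ _ hv, hvne⟩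
      · rintro ⟨htU, htne⟩
        refine ⟨hUsub htU, t, hmem_self t htU, ?_⟩
        simp only [g]
        positivity
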